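/- arXiv:2006.10999 — 2 statements merged into one kernel-verified Lean document; each statement's English description precedes it below -/
import Mathlib

section
/- The block-matrix representation A ↦ (π_i ∘ A|_{V_j})_{i,j∈ℤ} from the ring of continuous additive endomorphisms of F_p((t))^d onto the ring M_{d,ℤ}(F_p) of matrices satisfying (M1)–(M3) is surjective, hence a ring isomorphism. -/
/-- Conditions (M1)–(M3) on a `ℤ×ℤ`-indexed block matrix with `d×d` blocks over `F_p`. -/
def IsMmat (p d : ℕ) (A : ℤ → ℤ → Matrix (Fin d) (Fin d) (ZMod p)) : Prop :=
  (∀ i : ℤ, ∃ J : ℤ, ∀ j : ℤ, J < j → A i j = 0) ∧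
  (∀ j : ℤ, ∃ I : ℤ, ∀ i : ℤ, i < I → A i j = 0) ∧
  (∃ I J : ℤ, ∀ i j : ℤ, i < I → J < j → A i j = 0)

/-- The block matrix `(A_{i,j})` of an additive endomorphism of `F_p((t))^d`. -/
noncomputable def blockMat (p d : ℕ)
    (A : AddMonoid.End (Fin d → LaurentSeries (ZMod p))) :
    ℤ → ℤ → Matrix (Fin d) (Fin d) (ZMod p) :=
  fun i j => Matrix.of fun r s =>
    ((A fun r' => HahnSeries.single j (if r' = s then (1 : ZMod p) else 0)) r).coeff i

namespace BlockMatAux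

open Multiplicative Filter

variable {p d : ℕ} [Fact p.Prime]

noncomputable section

variable (M : ℤ → ℤ → Matrix (Fin d) (Fin d) (ZMod p))

/-- The `i`-th coefficient of the `r`-th component of the image of `f`. -/
def ent (f : Fin d → LaurentSeries (ZMod p)) (r : Fin d) (i : ℤ) : ZMod p :=
  ∑ᶠ j : ℤ, ∑ s : Fin d, M i j r s * (f s).coeff j

lemma support_subset (f : Fin d → LaurentSeries (ZMod p)) (r : Fin d) (i J : ℤ)
    (hJ : ∀ j : ℤ, J < j → M i j = 0) :
    (Function.support fun j : ℤ => ∑ s : Fin d, M i j r s * (f s).coeff j)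
      ⊆ ⋃ s : Fin d, Set.Icc ((f s).order) J := by
  intro j hj
  obtain ⟨s, -, hs⟩ := Finset.exists_ne_zero_of_sum_ne_zero hj
  have hMij : M i j r s ≠ 0 := fun h => hs (by rw [h, zero_mul])
  have hc : (f s).coeff j ≠ 0 := fun h => hs (by rw [h, mul_zero])
  refine Set.mem_iUnion.2 ⟨s, HahnSeries.order_le_of_coeff_ne_zero hc, ?_⟩
  by_contra h
  exact hMij (by rw [hJ j (lt_of_not_ge h)]; rfl)

lemma support_finite (hM : IsMmat p d M) (f : Fin d → LaurentSeries (ZMod p)) (r : Fin d) (i : ℤ) :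
    (Function.support fun j : ℤ => ∑ s : Fin d, M i j r s * (f s).coeff j).Finite := by
  obtain ⟨J, hJ⟩ := hM.1 i
  exact (Set.finite_iUnion fun s : Fin d => Set.finite_Icc ((f s).order) J).subset
    (support_subset M f r i J hJ)

lemma exists_lowbound (hM : IsMmat p d M) (f : Fin d → LaurentSeries (ZMod p)) (r : Fin d) :
    ∃ B : ℤ, ∀ i : ℤ, i < B → ent M f r i = 0 := by
  obtain ⟨I₀, J₀, h3⟩ := hM.2.2
  have hT : (⋃ s : Fin d, ((f s).support ∩ Set.Iic J₀)).Finite := by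
    refine (Set.finite_iUnion fun s : Fin d => Set.finite_Icc ((f s).order) J₀).subset ?_
    refine Set.iUnion_mono fun s => ?_
    rintro j ⟨hj1, hj2⟩
    exact ⟨HahnSeries.order_le_of_coeff_ne_zero hj1, hj2⟩
  classical
  set F : Finset ℤ := insert I₀ (hT.toFinset.image fun j => (hM.2.1 j).choose) with hF
  have hne : F.Nonempty := ⟨I₀, Finset.mem_insert_self _ _⟩
  refine ⟨F.min' hne, fun i hi => ?_⟩
  have hI₀ : F.min' hne ≤ I₀ := Finset.min'_le _ _ (Finset.mem_insert_self _ _)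
  refine finsum_eq_zero_of_forall_eq_zero fun j => ?_
  refine Finset.sum_eq_zero fun s _ => ?_
  rcases eq_or_ne ((f s).coeff j) 0 with hc | hc
  · rw [hc, mul_zero]
  rcases le_or_gt j J₀ with hj | hj
  · have hjT : j ∈ hT.toFinset := hT.mem_toFinset.2 (Set.mem_iUnion.2 ⟨s, hc, hj⟩)
    have hle : F.min' hne ≤ (hM.2.1 j).choose :=
      Finset.min'_le _ _ (Finset.mem_insert_of_mem (Finset.mem_image_of_mem _ hjT))
    rw [(hM.2.1 j).choose_spec i (lt_of_lt_of_le hi hle)]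
    simp
  · rw [h3 i j (lt_of_lt_of_le hi hI₀) hj]
    simp

/-- The underlying function of the endomorphism built from `M`. -/
def toFun (hM : IsMmat p d M) (f : Fin d → LaurentSeries (ZMod p)) : Fin d → LaurentSeries (ZMod p) :=
  fun r =>
  { coeff := fun i => ent M f r i
    isPWO_support' := by
      obtain ⟨B, hB⟩ := exists_lowbound M hM f r
      have hbdd : BddBelow (Function.support fun i => ent M f r i) := by
        refine ⟨B, fun i hi => ?_⟩
        by_contra h
        exact hi (hB i (lt_of_not_ge h))
      exact Set.IsWF.isPWO hbdd.wellFoundedOn_lt }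

/-- The endomorphism built from `M`. -/
def hom (hM : IsMmat p d M) : AddMonoid.End (Fin d → LaurentSeries (ZMod p)) :=
  AddMonoidHom.mk' (toFun M hM) (by
    intro f g
    funext r
    refine HahnSeries.ext (funext fun i => ?_)
    show ent M (f + g) r i = ((toFun M hM f r) + (toFun M hM g r)).coeff i
    rw [HahnSeries.coeff_add]
    show ent M (f + g) r i = ent M f r i + ent M g r i
    unfold ent
    rw [← finsum_add_distrib (support_finite M hM f r i) (support_finite M hM g r i)]
    refine finsum_congr fun j => ?_
    rw [← Finset.sum_add_distrib]
    refine Finset.sum_congr rfl fun s _ => ?_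
    rw [Pi.add_apply, HahnSeries.coeff_add, mul_add])

lemma hom_apply_coeff (hM : IsMmat p d M) (f : Fin d → LaurentSeries (ZMod p)) (r : Fin d) (i : ℤ) :
    ((hom M hM f) r).coeff i = ent M f r i := rfl

lemma old_basis : (nhds (0 : LaurentSeries (ZMod p))).HasBasis
    (fun _ : (WithZero (Multiplicative ℤ))ˣ => True)
    (fun γ => {x | Valued.v x < (γ : WithZero (Multiplicative ℤ))}) := by
  refine (Valued.hasBasis_nhds_zero (LaurentSeries (ZMod p))
    (WithZero (Multiplicative ℤ))).to_hasBasis ?_ ?_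
  · intro u _
    refine ⟨Units.mk0 (MonoidWithZeroHom.ValueGroup₀.embedding u.1) (by simp), trivial,
      fun x hx => ?_⟩
    exact (Valuation.restrict_lt_iff_lt_embedding _).2 hx
  · intro γ _
    obtain ⟨g, hg⟩ := WithZero.ne_zero_iff_exists.1 γ.ne_zero
    have hx : Valued.v (HahnSeries.single (-(toAdd g)) (1 : ZMod p) :
        LaurentSeries (ZMod p)) = γ := by
      rw [← hg, LaurentSeries.valuation_single_zpow, neg_neg]
      rfl
    refine ⟨Units.mk0 (Valued.v.restrict (HahnSeries.single (-(toAdd g)) (1 : ZMod p) :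
      LaurentSeries (ZMod p))) (by simp), trivial, fun y hy => ?_⟩
    have := (Valuation.restrict_lt_iff _).1 hy
    simpa [hx] using this

lemma continuous_hom (hM : IsMmat p d M) : Continuous (hom M hM) := by
  refine continuous_of_continuousAt_zero (hom M hM) ?_
  rw [ContinuousAt, map_zero, tendsto_pi_nhds]
  intro r
  simp only [Pi.zero_apply]
  rw [(old_basis (p := p)).tendsto_right_iff]
  intro γ _
  -- pick D with ofAdd (-D) < γ
  obtain ⟨g, hg⟩ := WithZero.ne_zero_iff_exists.1 γ.ne_zero
  set D : ℤ := -(Multiplicative.toAdd g) + 1 with hD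
  have hDγ : ((Multiplicative.ofAdd (-D) : Multiplicative ℤ) : WithZero (Multiplicative ℤ))
      < (γ : WithZero (Multiplicative ℤ)) := by
    rw [← hg, WithZero.coe_lt_coe]
    rw [← ofAdd_toAdd g, Multiplicative.ofAdd_lt]
    omega
  obtain ⟨I₀, J₀, h3⟩ := hM.2.2
  classical
  set F : Finset ℤ :=
    insert (J₀ + 1) ((Finset.Ico I₀ D).image fun i => (hM.1 i).choose + 1) with hF
  have hne : F.Nonempty := ⟨J₀ + 1, Finset.mem_insert_self _ _⟩
  set N : ℤ := F.max' hne with hN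
  have hev : ∀ᶠ f : (Fin d → LaurentSeries (ZMod p)) in nhds 0,
      ∀ s, Valued.v (f s) ≤
        ((Multiplicative.ofAdd (-N) : Multiplicative ℤ) : WithZero (Multiplicative ℤ)) := by
    rw [eventually_all]
    intro s
    have hc : Tendsto (fun f : Fin d → LaurentSeries (ZMod p) => f s)
        (nhds 0) (nhds (0 : LaurentSeries (ZMod p))) :=
      (continuous_apply s).tendsto' 0 0 rfl
    refine hc.eventually (p := fun x => Valued.v x ≤
      ((Multiplicative.ofAdd (-N) : Multiplicative ℤ) : WithZero (Multiplicative ℤ))) ?_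
    refine (old_basis (p := p)).eventually_iff.2
      ⟨Units.mk0 ((Multiplicative.ofAdd (-N) : Multiplicative ℤ) :
        WithZero (Multiplicative ℤ)) WithZero.coe_ne_zero, trivial,
        fun x hx => le_of_lt hx⟩
  refine hev.mono fun f hf => ?_
  have hcoeff : ∀ s, ∀ j : ℤ, j < N → (f s).coeff j = 0 := fun s =>
    (LaurentSeries.valuation_le_iff_coeff_lt_eq_zero (ZMod p)).1 (hf s)
  have hval : Valued.v ((hom M hM f) r) ≤
      ((Multiplicative.ofAdd (-D) : Multiplicative ℤ) : WithZero (Multiplicative ℤ)) := by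
    rw [show ((Multiplicative.ofAdd (-D) : Multiplicative ℤ) : WithZero (Multiplicative ℤ))
      = WithZero.exp (-D) from rfl, LaurentSeries.valuation_le_iff_coeff_lt_eq_zero]
    intro n hn
    rw [hom_apply_coeff]
    refine finsum_eq_zero_of_forall_eq_zero fun j => ?_
    refine Finset.sum_eq_zero fun s _ => ?_
    rcases lt_or_ge j N with hj | hj
    · rw [hcoeff s j hj, mul_zero]
    rcases lt_or_ge n I₀ with hn' | hn'
    · have hJ₀ : J₀ < j := by
        have : (J₀ + 1 : ℤ) ≤ N := Finset.le_max' _ _ (Finset.mem_insert_self _ _)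
        omega
      rw [h3 n j hn' hJ₀]
      simp
    · have hmem : (hM.1 n).choose + 1 ≤ N := by
        refine Finset.le_max' F _ ?_
        exact Finset.mem_insert_of_mem
          (Finset.mem_image_of_mem _ (Finset.mem_Ico.2 ⟨hn', hn⟩))
      rw [(hM.1 n).choose_spec j (by omega)]
      simp
  exact lt_of_le_of_lt hval hDγ

lemma blockMat_eq (hM : IsMmat p d M) : blockMat p d (hom M hM) = M := by
  funext i j
  ext r s
  show ((hom M hM fun r' => HahnSeries.single j
      (if r' = s then (1 : ZMod p) else 0)) r).coeff i = M i j r s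
  rw [hom_apply_coeff]
  unfold ent
  classical
  rw [finsum_eq_single _ j (fun j' hj' => Finset.sum_eq_zero fun s' _ => by
    rw [HahnSeries.coeff_single_of_ne hj', mul_zero])]
  simp [HahnSeries.coeff_single_same, mul_ite, mul_one, mul_zero]

end

end BlockMatAux

/-- The block-matrix representation of continuous additive endomorphisms of `F_p((t))^d`
is surjective onto the ring `M_{d,ℤ}(F_p)` of matrices satisfying (M1)–(M3); together with
injectivity this makes it a ring isomorphism. -/
theorem blockMat_surjective (p : ℕ) [Fact p.Prime] (d : ℕ) (hd : 0 < d)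
    (M : ℤ → ℤ → Matrix (Fin d) (Fin d) (ZMod p)) (hM : IsMmat p d M) :
    ∃ A : AddMonoid.End (Fin d → LaurentSeries (ZMod p)),
      Continuous A ∧ blockMat p d A = M := by
  exact ⟨BlockMatAux.hom M hM, BlockMatAux.continuous_hom M hM, BlockMatAux.blockMat_eq M hM⟩
end

section
/- Let τ = [t·]^{⊕d} be the automorphism of F_p((t))^d given by coordinatewise multiplication by t. If V is a compact open subgroup of F_p((t))^d that is τ-invariant (τ(V) ⊆ V), then the index [V : τ(V)] equals p^d. -/
open scoped Multiplicative Topology WithZero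

/-- The automorphism `τ = [t·]^{⊕d}` of `F_p((t))^d`: coordinatewise multiplication
by `t`, as an additive homomorphism. -/
noncomputable def tauHom (p d : ℕ) [Fact p.Prime] :
    (Fin d → LaurentSeries (ZMod p)) →+ (Fin d → LaurentSeries (ZMod p)) where
  toFun z := fun r => HahnSeries.single (1 : ℤ) (1 : ZMod p) * z r
  map_zero' := by funext r; simp
  map_add' x y := by funext r; simp [mul_add]

variable (p d : ℕ) [Fact p.Prime]

/-- The "ball" subgroup of tuples of Laurent series whose coefficients vanish
below `k` in every coordinate. -/
def Bsub (k : ℤ) : AddSubgroup (Fin d → LaurentSeries (ZMod p)) where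
  carrier := {f | ∀ r, ∀ n : ℤ, n < k → (f r).coeff n = 0}
  zero_mem' := by intro r n _; simp
  add_mem' := by intro f g hf hg r n hn; simp [hf r n hn, hg r n hn]
  neg_mem' := by intro f hf r n hn; simp [hf r n hn]

lemma tauHom_injective : Function.Injective (tauHom p d) := by
  intro x y h
  funext r
  have h' : HahnSeries.single (1 : ℤ) (1 : ZMod p) * x r
      = HahnSeries.single (1 : ℤ) (1 : ZMod p) * y r := congrFun h r
  exact mul_left_cancel₀ (HahnSeries.single_ne_zero one_ne_zero) h'

lemma map_tauHom_Bsub (k : ℤ) :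
    (Bsub p d k).map (tauHom p d) = Bsub p d (k + 1) := by
  ext f
  constructor
  · rintro ⟨g, hg, rfl⟩ r n hn
    have h1 : ((HahnSeries.single (1 : ℤ) (1 : ZMod p)) * g r).coeff ((n - 1) + 1)
        = 1 * (g r).coeff (n - 1) := HahnSeries.coeff_single_mul_add
    rw [sub_add_cancel] at h1
    show ((HahnSeries.single (1 : ℤ) (1 : ZMod p)) * g r).coeff n = 0
    rw [h1, one_mul, hg r (n - 1) (by omega)]
  · intro hf
    refine ⟨fun r => HahnSeries.single (-1 : ℤ) (1 : ZMod p) * f r, ?_, ?_⟩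
    · intro r n hn
      have h1 : ((HahnSeries.single (-1 : ℤ) (1 : ZMod p)) * f r).coeff ((n + 1) + (-1))
          = 1 * (f r).coeff (n + 1) := HahnSeries.coeff_single_mul_add
      rw [add_neg_cancel_right] at h1
      rw [h1, one_mul, hf r (n + 1) (by omega)]
    · funext r
      show HahnSeries.single (1 : ℤ) (1 : ZMod p)
          * (HahnSeries.single (-1 : ℤ) (1 : ZMod p) * f r) = f r
      rw [← mul_assoc, HahnSeries.single_mul_single]
      norm_num [HahnSeries.single_zero_one]

lemma Bsub_isOpen (k : ℤ) : IsOpen ((Bsub p d k : Set (Fin d → LaurentSeries (ZMod p)))) := by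
  have hS : IsOpen {x : LaurentSeries (ZMod p) |
      Valued.v x ≤ WithZero.exp (-k)} := by
    obtain ⟨x₀, hx₀⟩ := LaurentSeries.valuation_surjective (ZMod p) (WithZero.exp (-k))
    have hr : Valued.v.restrict x₀ ≠ 0 :=
      ne_of_gt ((Valuation.restrict_pos_iff _ x₀).mpr
        (zero_lt_iff.mpr (by rw [hx₀]; exact WithZero.exp_ne_zero)))
    have h := Valued.isOpen_closedBall (LaurentSeries (ZMod p)) hr
    simp only [Valuation.restrict_le_iff, hx₀] at h
    exact h
  have heq : (Bsub p d k : Set (Fin d → LaurentSeries (ZMod p)))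
      = ⋂ r : Fin d, (fun f : Fin d → LaurentSeries (ZMod p) => f r) ⁻¹'
        {x : LaurentSeries (ZMod p) |
          Valued.v x ≤ WithZero.exp (-k)} := by
    ext f
    simp only [Set.mem_iInter, Set.mem_preimage, Set.mem_setOf_eq,
      LaurentSeries.valuation_le_iff_coeff_lt_eq_zero (ZMod p)]
    rfl
  rw [heq]
  exact isOpen_iInter_of_finite fun r => hS.preimage (continuous_apply r)

lemma relindex_Bsub (k : ℤ) :
    (Bsub p d (k + 1)).relIndex (Bsub p d k) = p ^ d := by
  set φ : ↥(Bsub p d k) →+ (Fin d → ZMod p) :=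
    { toFun := fun f => fun r => ((f : Fin d → LaurentSeries (ZMod p)) r).coeff k
      map_zero' := by funext r; simp
      map_add' := by intro f g; funext r; simp }
  have hsurj : Function.Surjective φ := by
    intro c
    refine ⟨⟨fun r => HahnSeries.single (k : ℤ) (c r), fun r n hn =>
      HahnSeries.coeff_single_of_ne (ne_of_lt hn)⟩, ?_⟩
    funext r
    exact HahnSeries.coeff_single_same k (c r)
  have hker : (Bsub p d (k + 1)).addSubgroupOf (Bsub p d k) = φ.ker := by
    ext f
    constructor
    · intro hf
      have : ∀ r, ((f : Fin d → LaurentSeries (ZMod p)) r).coeff k = 0 :=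
        fun r => hf r k (by omega)
      exact funext this
    · intro hf r n hn
      rcases lt_or_eq_of_le (Int.lt_add_one_iff.mp hn) with h | h
      · exact f.2 r n h
      · subst h; exact congrFun hf r
  rw [AddSubgroup.relIndex, hker, AddSubgroup.index]
  rw [Nat.card_congr (QuotientAddGroup.quotientKerEquivOfSurjective φ hsurj).toEquiv]
  simp [Nat.card_pi, Nat.card_zmod]

/-- If `V` is a `τ`-invariant compact open subgroup of `F_p((t))^d`, then the index
`[V : τ(V)]` equals `p^d`. -/
theorem index_tau_eq (p : ℕ) [Fact p.Prime] (d : ℕ) (hd : 0 < d)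
    (V : AddSubgroup (Fin d → LaurentSeries (ZMod p)))
    (hVc : IsCompact (V : Set (Fin d → LaurentSeries (ZMod p))))
    (hVo : IsOpen (V : Set (Fin d → LaurentSeries (ZMod p))))
    (hτV : V.map (tauHom p d) ≤ V) :
    (V.map (tauHom p d)).relIndex V = p ^ d := by
  -- find k with Bsub k ≤ V
  have h0V : (V : Set (Fin d → LaurentSeries (ZMod p))) ∈ 𝓝 0 := hVo.mem_nhds V.zero_mem
  rw [nhds_pi, Filter.mem_pi] at h0V
  obtain ⟨I, _hI, t, ht, htV⟩ := h0V
  choose γ hγ using fun i => Valued.mem_nhds_zero.mp (ht i)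
  choose a ha using fun i => WithZero.ne_zero_iff_exists.mp
    ((map_ne_zero MonoidWithZeroHom.ValueGroup₀.embedding).mpr (γ i).ne_zero)
  set k : ℤ := 1 + ∑ i : Fin d, |Multiplicative.toAdd (a i)| with hk
  have hki : ∀ i, (-k) < Multiplicative.toAdd (a i) := by
    intro i
    have h1 : |Multiplicative.toAdd (a i)| ≤ ∑ j : Fin d, |Multiplicative.toAdd (a j)| :=
      Finset.single_le_sum (f := fun j => |Multiplicative.toAdd (a j)|)
        (fun j _ => abs_nonneg _) (Finset.mem_univ i)
    have := neg_abs_le (Multiplicative.toAdd (a i))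
    omega
  have hBV : Bsub p d k ≤ V := by
    intro f hf
    apply htV
    intro i _
    apply hγ i
    rw [Set.mem_setOf_eq, Valuation.restrict_lt_iff_lt_embedding]
    have h1 : Valued.v (f i) ≤ ((Multiplicative.ofAdd (-k) : Multiplicative ℤ) : ℤᵐ⁰) :=
      (LaurentSeries.valuation_le_iff_coeff_lt_eq_zero (ZMod p)).mpr (hf i)
    have h2 : ((Multiplicative.ofAdd (-k) : Multiplicative ℤ) : ℤᵐ⁰) <
        MonoidWithZeroHom.ValueGroup₀.embedding (γ i).1 := by
      rw [← ha i, WithZero.coe_lt_coe]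
      exact hki i
    exact lt_of_le_of_lt h1 h2
  set W := V.map (tauHom p d) with hW
  have hBW : Bsub p d (k + 1) ≤ W := by
    rw [← map_tauHom_Bsub]
    exact AddSubgroup.map_mono hBV
  have hsub : Bsub p d (k + 1) ≤ Bsub p d k := fun f hf r n hn => hf r n (by omega)
  -- finiteness
  haveI : CompactSpace ↥V := isCompact_iff_compactSpace.mp hVc
  haveI : Finite (↥V ⧸ (Bsub p d k).addSubgroupOf V) := by
    apply AddSubgroup.quotient_finite_of_isOpen
    have : ((Bsub p d k).addSubgroupOf V : Set ↥V)
        = (Subtype.val : ↥V → (Fin d → LaurentSeries (ZMod p))) ⁻¹' (Bsub p d k) := rfl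
    rw [this]
    exact (Bsub_isOpen p d k).preimage continuous_subtype_val
  have hne : (Bsub p d k).relIndex V ≠ 0 := AddSubgroup.index_ne_zero_of_finite
  -- index computations
  have e1 := AddSubgroup.relIndex_mul_relIndex (Bsub p d (k + 1)) W V hBW hτV
  have e2 := AddSubgroup.relIndex_mul_relIndex (Bsub p d (k + 1)) (Bsub p d k) V hsub hBV
  have e3 : (Bsub p d (k + 1)).relIndex W = (Bsub p d k).relIndex V := by
    have h := AddSubgroup.relIndex_comap (H := Bsub p d (k + 1)) (tauHom p d) V
    rw [← map_tauHom_Bsub p d k,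
      AddSubgroup.comap_map_eq_self_of_injective (tauHom_injective p d)] at h
    rw [map_tauHom_Bsub] at h
    rw [← hW] at h
    exact h.symm
  have e1' : (Bsub p d k).relIndex V * W.relIndex V = (Bsub p d (k + 1)).relIndex V := by
    rw [← e3]; exact e1
  have e2' : (p : ℕ) ^ d * (Bsub p d k).relIndex V = (Bsub p d (k + 1)).relIndex V := by
    rw [← relindex_Bsub p d k]; exact e2
  have hmain : (Bsub p d k).relIndex V * W.relIndex V
      = (Bsub p d k).relIndex V * p ^ d := by
    rw [e1', ← e2', mul_comm]
  exact Nat.eq_of_mul_eq_mul_left (Nat.pos_of_ne_zero hne) hmain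
end
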